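/- If the line graph on N vertices has uniform edge weight b > 0, then the nonzero eigenvalues of its Laplacian are λ_n = 2b(1 − cos(π(n−1)/N)) = 4b·sin²(π(n−1)/(2N)) for n = 2,...,N, and each satisfies λ_n < 4b ≤ Nb for N ≥ 4; consequently, by monotonicity of the per-mode DAPI loss factor in λ, the DAPI transient losses on the line graph are strictly smaller than on the complete graph with the same edge weight b (for the same parameters m, k, τ, γ > 0 and N ≥ 4). -/

import Mathlib

open Matrix Real

lemma lgbc_sum_ite {N : ℕ} (v : Fin N → ℝ) (P : Fin N → Prop) [DecidablePred P] (t : Fin N)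
    (h1 : P t) (h2 : ∀ j, P j → j = t) :
    ∑ j : Fin N, (if P j then v j else 0) = v t := by
  rw [Finset.sum_eq_single t]
  · rw [if_pos h1]
  · intro j _ hj; rw [if_neg (fun hP => hj (h2 j hP))]
  · simp

lemma lgbc_trig (b θ x : ℝ) :
    2*b*(1 - Real.cos θ) * Real.cos x
      = 2*b*Real.cos x - b*Real.cos (x-θ) - b*Real.cos (x+θ) := by
  rw [Real.cos_sub, Real.cos_add]; ring

lemma lgbc_det_zero (N : ℕ) (hN : 4 ≤ N) (b : ℝ)
    (L : Matrix (Fin N) (Fin N) ℝ)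
    (hL : ∀ i j : Fin N, L i j =
      if i = j then
        ((if (i : ℕ) = 0 then 0 else 1) + (if (i : ℕ) = N - 1 then 0 else 1)) * b
      else if (i : ℕ) + 1 = (j : ℕ) ∨ (j : ℕ) + 1 = (i : ℕ) then -b else 0)
    (θ : ℝ) (hcos : 0 < Real.cos (θ/2)) (hsin : Real.sin (θ * N) = 0) :
    Matrix.det ((2*b*(1 - Real.cos θ)) • (1 : Matrix (Fin N) (Fin N) ℝ) - L) = 0 := by
  rw [← Matrix.exists_mulVec_eq_zero_iff]
  set lam : ℝ := 2*b*(1 - Real.cos θ) with hlam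
  refine ⟨fun j => Real.cos (θ * (((j:ℕ):ℝ) + 1/2)), ?_, ?_⟩
  · intro h0
    have h4 : (0:ℕ) < N := by omega
    have := congrFun h0 ⟨0, h4⟩
    simp only [Pi.zero_apply] at this
    rw [show θ * (((((⟨0, h4⟩ : Fin N)):ℕ):ℝ) + 1/2) = θ/2 by push_cast; ring] at this
    exact absurd this (ne_of_gt hcos)
  · funext i
    set v : Fin N → ℝ := fun j => Real.cos (θ * (((j:ℕ):ℝ) + 1/2)) with hv
    have expand : ((lam • (1 : Matrix (Fin N) (Fin N) ℝ) - L) *ᵥ v) i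
        = lam * v i - ∑ j, L i j * v j := by
      simp only [Matrix.mulVec, dotProduct, Matrix.sub_apply, Matrix.smul_apply,
        Matrix.one_apply, smul_eq_mul, sub_mul, mul_ite, mul_one, mul_zero,
        Finset.sum_sub_distrib, ite_mul, zero_mul]
      rw [Finset.sum_ite_eq Finset.univ i (fun j => lam * v j)]
      simp
    have hsplit : ∀ j : Fin N, L i j * v j =
        (((if (i:ℕ) = 0 then (0:ℝ) else 1) + (if (i:ℕ) = N-1 then 0 else 1)) * b)
            * (if i = j then v j else 0)
        + (-b) * (if (i:ℕ)+1 = (j:ℕ) then v j else 0)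
        + (-b) * (if (j:ℕ)+1 = (i:ℕ) then v j else 0) := by
      intro j
      rw [hL i j]
      simp only [Fin.ext_iff]
      split_ifs <;> first | ring1 | (exfalso; omega)
    have hsum : ∑ j, L i j * v j =
        (((if (i:ℕ) = 0 then (0:ℝ) else 1) + (if (i:ℕ) = N-1 then 0 else 1)) * b)
            * (∑ j : Fin N, if i = j then v j else 0)
        + (-b) * (∑ j : Fin N, if (i:ℕ)+1 = (j:ℕ) then v j else 0)
        + (-b) * (∑ j : Fin N, if (j:ℕ)+1 = (i:ℕ) then v j else 0) := by
      rw [Finset.sum_congr rfl (fun j _ => hsplit j), Finset.sum_add_distrib,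
        Finset.sum_add_distrib, ← Finset.mul_sum, ← Finset.mul_sum, ← Finset.mul_sum]
    have hS0 : (∑ j : Fin N, if i = j then v j else 0) = v i :=
      lgbc_sum_ite v _ i rfl (fun j hj => hj.symm)
    rw [Pi.zero_apply, expand, hsum, hS0]
    by_cases hi0 : (i:ℕ) = 0
    · have hiN : ¬ ((i:ℕ) = N - 1) := by omega
      have h1N : 1 < N := by omega
      have hS1 : (∑ j : Fin N, if (i:ℕ)+1 = (j:ℕ) then v j else 0) = v ⟨1, h1N⟩ :=
        lgbc_sum_ite v _ ⟨1, h1N⟩ (by simp [hi0]) (fun j hj => Fin.ext (by simp; omega))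
      have hS2 : (∑ j : Fin N, if (j:ℕ)+1 = (i:ℕ) then v j else 0) = 0 := by
        apply Finset.sum_eq_zero; intro j _; rw [if_neg (by omega)]
      rw [hS1, hS2, if_pos hi0, if_neg hiN]
      have e := lgbc_trig b θ (θ/2)
      rw [show θ/2 - θ = -(θ/2) by ring, Real.cos_neg] at e
      have a0 : v i = Real.cos (θ/2) := by
        rw [hv]; simp only; rw [hi0]; congr 1; push_cast; ring
      have a1 : v ⟨1, h1N⟩ = Real.cos (θ/2 + θ) := by
        rw [hv]; simp only
        rw [show θ * ((((⟨1, h1N⟩ : Fin N):ℕ):ℝ) + 1/2) = θ/2 + θ by push_cast; ring]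
      rw [a0, a1, hlam]
      linarith [e]
    · by_cases hiN : (i:ℕ) = N - 1
      · have hS1 : (∑ j : Fin N, if (i:ℕ)+1 = (j:ℕ) then v j else 0) = 0 := by
          apply Finset.sum_eq_zero; intro j _; rw [if_neg (by omega)]
        have hN2 : N - 2 < N := by omega
        have hS2 : (∑ j : Fin N, if (j:ℕ)+1 = (i:ℕ) then v j else 0) = v ⟨N-2, hN2⟩ :=
          lgbc_sum_ite v _ ⟨N-2, hN2⟩ (by simp; omega) (fun j hj => Fin.ext (by simp; omega))
        rw [hS1, hS2, if_neg hi0, if_pos hiN]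
        set x : ℝ := θ * ((N:ℝ) - 1 + 1/2) with hx
        have a0 : v i = Real.cos x := by
          rw [hv]; simp only; rw [hx]
          congr 2
          rw [hiN]
          push_cast [Nat.cast_sub (by omega : 1 ≤ N)]
          ring
        have a2 : v ⟨N-2, hN2⟩ = Real.cos (x - θ) := by
          rw [hv]; simp only; rw [hx]
          congr 1
          push_cast [Nat.cast_sub (by omega : 2 ≤ N)]
          ring
        have hghost : Real.cos (x + θ) = Real.cos x := by
          rw [show x + θ = θ * N + θ/2 by rw [hx]; ring,
              show x = θ * N - θ/2 by rw [hx]; ring,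
              Real.cos_add, Real.cos_sub, hsin]
          ring
        have e := lgbc_trig b θ x
        rw [hghost] at e
        rw [a0, a2, hlam]
        linarith [e]
      · have hi1 : 1 ≤ (i:ℕ) := by omega
        have hiN2 : (i:ℕ) + 1 < N := by omega
        have hS1 : (∑ j : Fin N, if (i:ℕ)+1 = (j:ℕ) then v j else 0) = v ⟨(i:ℕ)+1, hiN2⟩ :=
          lgbc_sum_ite v _ ⟨(i:ℕ)+1, hiN2⟩ (by simp) (fun j hj => Fin.ext (by simp; omega))
        have hiP : (i:ℕ) - 1 < N := by omega
        have hS2 : (∑ j : Fin N, if (j:ℕ)+1 = (i:ℕ) then v j else 0) = v ⟨(i:ℕ)-1, hiP⟩ :=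
          lgbc_sum_ite v _ ⟨(i:ℕ)-1, hiP⟩ (by simp; omega) (fun j hj => Fin.ext (by simp; omega))
        rw [hS1, hS2, if_neg hi0, if_neg hiN]
        set x : ℝ := θ * (((i:ℕ):ℝ) + 1/2) with hx
        have a1 : v ⟨(i:ℕ)+1, hiN2⟩ = Real.cos (x + θ) := by
          rw [hv]; simp only; rw [hx]
          congr 1
          push_cast
          ring
        have a2 : v ⟨(i:ℕ)-1, hiP⟩ = Real.cos (x - θ) := by
          rw [hv]; simp only; rw [hx]
          congr 1
          push_cast [Nat.cast_sub hi1]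
          ring
        have e := lgbc_trig b θ x
        have a0 : v i = Real.cos x := rfl
        rw [a0, a1, a2, hlam]
        linarith [e]

lemma lgbc_mono (m k τ γ : ℝ) (hm : 0 < m) (hk : 0 < k) (hτ : 0 < τ) (hγ : 0 < γ)
    {x y : ℝ} (hx : 0 < x) (hxy : x < y) :
    1 / (1 + (γ*τ*x + k) / (γ*x*(γ*τ*x + k) + k^2*m*x))
      < 1 / (1 + (γ*τ*y + k) / (γ*y*(γ*τ*y + k) + k^2*m*y)) := by
  have hy : 0 < y := hx.trans hxy
  have hDx : 0 < γ*x*(γ*τ*x + k) + k^2*m*x := by positivity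
  have hDy : 0 < γ*y*(γ*τ*y + k) + k^2*m*y := by positivity
  have hgy : 0 < (γ*τ*y + k) / (γ*y*(γ*τ*y + k) + k^2*m*y) := by positivity
  have hlt : (γ*τ*y + k) / (γ*y*(γ*τ*y + k) + k^2*m*y)
      < (γ*τ*x + k) / (γ*x*(γ*τ*x + k) + k^2*m*x) := by
    rw [div_lt_div_iff₀ hDy hDx]
    have key : 0 < (y - x) * (γ*(γ*τ*x+k)*(γ*τ*y+k) + k^3*m) :=
      mul_pos (sub_pos.2 hxy) (by positivity)
    nlinarith [key]
  exact one_div_lt_one_div_of_lt (by positivity) (by linarith)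

theorem line_graph_beats_complete_graph
    (N : ℕ) (hN : 4 ≤ N) (b m k τ γ : ℝ) (hb : 0 < b) (hm : 0 < m) (hk : 0 < k)
    (hτ : 0 < τ) (hγ : 0 < γ)
    (L : Matrix (Fin N) (Fin N) ℝ)
    (hL : ∀ i j : Fin N, L i j =
      if i = j then
        ((if (i : ℕ) = 0 then 0 else 1) + (if (i : ℕ) = N - 1 then 0 else 1)) * b
      else if (i : ℕ) + 1 = (j : ℕ) ∨ (j : ℕ) + 1 = (i : ℕ) then -b else 0) :
    (∀ n : ℕ, 2 ≤ n → n ≤ N →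
      Matrix.det ((4 * b * Real.sin (π * ((n : ℝ) - 1) / (2 * N)) ^ 2) •
          (1 : Matrix (Fin N) (Fin N) ℝ) - L) = 0 ∧
      4 * b * Real.sin (π * ((n : ℝ) - 1) / (2 * N)) ^ 2 = 2 * b * (1 - Real.cos (π * ((n : ℝ) - 1) / N)) ∧
      4 * b * Real.sin (π * ((n : ℝ) - 1) / (2 * N)) ^ 2 < 4 * b ∧
      4 * b ≤ (N : ℝ) * b) ∧
    (∑ n ∈ Finset.Icc 2 N,
        1 / (1 + (γ * τ * (4 * b * Real.sin (π * ((n : ℝ) - 1) / (2 * N)) ^ 2) + k) /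
          (γ * (4 * b * Real.sin (π * ((n : ℝ) - 1) / (2 * N)) ^ 2) *
            (γ * τ * (4 * b * Real.sin (π * ((n : ℝ) - 1) / (2 * N)) ^ 2) + k) +
            k ^ 2 * m * (4 * b * Real.sin (π * ((n : ℝ) - 1) / (2 * N)) ^ 2))))
      < ∑ n ∈ Finset.Icc 2 N,
        1 / (1 + (γ * τ * ((N : ℝ) * b) + k) /
          (γ * ((N : ℝ) * b) * (γ * τ * ((N : ℝ) * b) + k) + k ^ 2 * m * ((N : ℝ) * b))) := by
  have hπ := Real.pi_pos
  have hN0 : (0:ℝ) < (N:ℝ) := by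
    have : 0 < N := by omega
    exact_mod_cast this
  have hNne : (N:ℝ) ≠ 0 := ne_of_gt hN0
  have h4N : (4:ℝ) ≤ (N:ℝ) := by exact_mod_cast hN
  have key : ∀ n : ℕ, 2 ≤ n → n ≤ N →
      0 < 4 * b * Real.sin (π * ((n : ℝ) - 1) / (2 * N)) ^ 2 ∧
      4 * b * Real.sin (π * ((n : ℝ) - 1) / (2 * N)) ^ 2 < 4 * b ∧
      4 * b * Real.sin (π * ((n : ℝ) - 1) / (2 * N)) ^ 2
        = 2 * b * (1 - Real.cos (π * ((n : ℝ) - 1) / N)) ∧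
      0 < Real.cos (π * ((n : ℝ) - 1) / (2 * N)) := by
    intro n h2 hn
    have hn1 : (1:ℝ) ≤ (n:ℝ) - 1 := by
      have : (2:ℝ) ≤ (n:ℝ) := by exact_mod_cast h2
      linarith
    have hnN : (n:ℝ) - 1 < (N:ℝ) := by
      have : (n:ℝ) ≤ (N:ℝ) := by exact_mod_cast hn
      linarith
    set a := π * ((n : ℝ) - 1) / (2 * N) with ha
    have ha0 : 0 < a := by
      rw [ha]
      exact div_pos (mul_pos hπ (by linarith)) (by linarith)
    have ha2 : a < π/2 := by
      rw [ha, div_lt_div_iff₀ (by linarith) (by norm_num)]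
      nlinarith [mul_lt_mul_of_pos_left hnN hπ]
    have hcos : 0 < Real.cos a := Real.cos_pos_of_mem_Ioo ⟨by linarith, ha2⟩
    have hsin : 0 < Real.sin a := Real.sin_pos_of_pos_of_lt_pi ha0 (by linarith)
    have hsin1 : Real.sin a < 1 := by nlinarith [Real.sin_sq_add_cos_sq a]
    have hid : 4 * b * Real.sin a ^ 2 = 2 * b * (1 - Real.cos (π * ((n : ℝ) - 1) / N)) := by
      have h2a : π * ((n : ℝ) - 1) / N = 2 * a := by rw [ha]; field_simp
      rw [h2a, Real.cos_two_mul]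
      linear_combination (4*b) * Real.sin_sq_add_cos_sq a
    refine ⟨by positivity, ?_, hid, hcos⟩
    have hs2 : Real.sin a ^ 2 < 1 := by nlinarith
    nlinarith [mul_pos hb (sub_pos.2 hs2)]
  constructor
  · intro n h2 hn
    obtain ⟨hpos, hlt, hid, hcos⟩ := key n h2 hn
    refine ⟨?_, hid, hlt, ?_⟩
    · rw [hid]
      apply lgbc_det_zero N hN b L hL (π * ((n : ℝ) - 1) / N)
      · rw [show (π * ((n : ℝ) - 1) / ↑N)/2 = π * ((n : ℝ) - 1) / (2 * ↑N) by ring]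
        exact hcos
      · have harg : (π * ((n : ℝ) - 1) / ↑N) * ↑N = ((n - 1 : ℕ):ℝ) * π := by
          push_cast [Nat.cast_sub (show 1 ≤ n by omega)]
          field_simp
        rw [harg]
        exact Real.sin_nat_mul_pi (n-1)
    · nlinarith [mul_nonneg (show (0:ℝ) ≤ (N:ℝ) - 4 by linarith) hb.le]
  · apply Finset.sum_lt_sum_of_nonempty
    · exact Finset.nonempty_Icc.mpr (by omega)
    · intro n hn
      obtain ⟨h2, hn'⟩ := Finset.mem_Icc.mp hn
      obtain ⟨hpos, hlt, _, _⟩ := key n h2 hn'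
      refine lgbc_mono m k τ γ hm hk hτ hγ hpos ?_
      nlinarith [mul_nonneg (show (0:ℝ) ≤ (N:ℝ) - 4 by linarith) hb.le]
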